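/- If β ≡ 2 (mod 3), then there is no interesting reversed sum-product pair (2, b) for base β; that is, the only reversed sum-product pair with a = 2 for such β is (2,2) (when β ≥ 5). -/

import Mathlib

/-- `(a, b)` is a reversed sum-product pair for base `β`: `a ≤ b` are positive
integers and the base-`β` digit sequence of `a * b` is the reverse of that of
`a + b` (in particular they have the same number of digits). -/
def IsRSP (β a b : ℕ) : Prop :=
  0 < a ∧ a ≤ b ∧ Nat.digits β (a * b) = (Nat.digits β (a + b)).reverse

lemma digitsGet {β : ℕ} (hβ : 1 < β) (i : ℕ) : ∀ (n : ℕ) (h : i < (Nat.digits β n).length),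
    (Nat.digits β n)[i] = n / β ^ i % β := by
  induction i with
  | zero =>
    intro n h
    have hn : 0 < n := by
      rcases Nat.eq_zero_or_pos n with rfl | h'
      · simp at h
      · exact h'
    rw [List.getElem_of_eq (Nat.digits_def' hβ hn) _]
    simp
  | succ i ih =>
    intro n h
    have hn : 0 < n := by
      rcases Nat.eq_zero_or_pos n with rfl | h'
      · simp at h
      · exact h'
    have h' : i + 1 < (n % β :: Nat.digits β (n / β)).length := by
      rw [← Nat.digits_def' hβ hn]; exact h
    rw [List.getElem_of_eq (Nat.digits_def' hβ hn) _]
    simp only [List.getElem_cons_succ]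
    rw [ih (n / β) (by simpa using h'), Nat.div_div_eq_div_mul, ← pow_succ']

lemma digitsTwo {β n : ℕ} (hβ : 1 < β) (h1 : β ≤ n) (h2 : n < β ^ 2) :
    Nat.digits β n = [n % β, n / β] := by
  have hn : 0 < n := by omega
  have hd1 : 0 < n / β := Nat.one_le_div_iff (by omega) |>.mpr h1
  have hd2 : n / β < β := Nat.div_lt_of_lt_mul (by rw [← pow_two]; exact h2)
  rw [Nat.digits_def' hβ hn, Nat.digits_def' hβ hd1, Nat.mod_eq_of_lt hd2,
    Nat.div_eq_of_lt hd2, Nat.digits_zero]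

lemma core2 (β a0 a1 : ℤ) (hβ : 5 ≤ β) (hm : β % 3 = 2)
    (h00 : 1 ≤ a0) (h01 : a0 < β) (h10 : 1 ≤ a1) (h11 : a1 < β)
    (e : a1 + β * a0 + 4 = 2 * a0 + 2 * β * a1) : False := by
  have key : β * (2 * a1 - a0) = a1 + 4 - 2 * a0 := by linear_combination -e
  have hb1 : 2 * a1 - a0 ≤ 1 := by
    by_contra hc
    push_neg at hc
    have h2 : 2 ≤ 2 * a1 - a0 := hc
    have := mul_le_mul_of_nonneg_left h2 (show (0:ℤ) ≤ β by linarith)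
    linarith
  have hb2 : -1 ≤ 2 * a1 - a0 := by
    by_contra hc
    push_neg at hc
    have h2 : 2 * a1 - a0 ≤ -2 := by linarith
    have := mul_le_mul_of_nonneg_left h2 (show (0:ℤ) ≤ β by linarith)
    linarith
  rcases (by omega : 2 * a1 - a0 = -1 ∨ 2 * a1 - a0 = 0 ∨ 2 * a1 - a0 = 1) with h | h | h <;>
    rw [h] at key <;> omega

lemma core (β a0 a1 a2 a3 t d : ℤ) (hβ : 5 ≤ β) (hm : β % 3 = 2)
    (h00 : 1 ≤ a0) (h01 : a0 < β) (h10 : 0 ≤ a1) (h11 : a1 < β)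
    (h20 : 0 ≤ a2) (h21 : a2 < β) (h30 : 1 ≤ a3) (h31 : a3 < β)
    (ht : t = -1 ∨ t = 0 ∨ t = 1) (hd : d = -1 ∨ d = 0 ∨ d = 1)
    (hd1 : d = -1 → a0 ≤ 1)
    (e1 : a3 + β * a2 = 2 * a0 + 2 * β * a1 - 4 + t * β ^ 2)
    (e2 : a1 + β * a0 = 2 * a2 + 2 * β * a3 + d) : False := by
  have hdb : -1 ≤ d ∧ d ≤ 1 := by rcases hd with rfl | rfl | rfl <;> norm_num
  obtain ⟨M, hMdef⟩ : ∃ M, 2 * a1 - a2 + t * β = M := ⟨_, rfl⟩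
  have keyM : β * M = a3 + 4 - 2 * a0 := by rw [← hMdef]; linear_combination -e1
  obtain ⟨N, hNdef⟩ : ∃ N, 2 * a3 - a0 = N := ⟨_, rfl⟩
  have keyN : β * N = a1 - 2 * a2 - d := by rw [← hNdef]; linear_combination -e2
  have hM1 : M ≤ 1 := by
    by_contra hc; push_neg at hc
    have h2 : 2 ≤ M := hc
    have := mul_le_mul_of_nonneg_left h2 (show (0:ℤ) ≤ β by linarith)
    linarith
  have hM2 : -1 ≤ M := by
    by_contra hc; push_neg at hc
    have h2 : M ≤ -2 := by linarith
    have := mul_le_mul_of_nonneg_left h2 (show (0:ℤ) ≤ β by linarith)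
    linarith
  have hN1 : N ≤ 1 := by
    by_contra hc; push_neg at hc
    have h2 : 2 ≤ N := hc
    have := mul_le_mul_of_nonneg_left h2 (show (0:ℤ) ≤ β by linarith)
    linarith
  have hN2 : -1 ≤ N := by
    by_contra hc; push_neg at hc
    have h2 : N ≤ -2 := by linarith
    have := mul_le_mul_of_nonneg_left h2 (show (0:ℤ) ≤ β by linarith)
    linarith
  have hMc : M = -1 ∨ M = 0 ∨ M = 1 := by omega
  have hNc : N = -1 ∨ N = 0 ∨ N = 1 := by omega
  rcases hd with rfl | rfl | rfl
  · have ha0 : a0 ≤ 1 := hd1 rfl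
    rcases ht with rfl | rfl | rfl <;> rcases hMc with rfl | rfl | rfl <;>
      rcases hNc with rfl | rfl | rfl <;> omega
  · rcases ht with rfl | rfl | rfl <;> rcases hMc with rfl | rfl | rfl <;>
      rcases hNc with rfl | rfl | rfl <;> omega
  · rcases ht with rfl | rfl | rfl <;> rcases hMc with rfl | rfl | rfl <;>
      rcases hNc with rfl | rfl | rfl <;> omega

set_option maxHeartbeats 1600000 in
lemma no_big (β b : ℕ) (hβ : 5 ≤ β) (hmod : β % 3 = 2) (hb : β ≤ b)
    (h : IsRSP β 2 b) : False := by
  obtain ⟨-, -, hrev⟩ := h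
  have hβ1 : 1 < β := by omega
  obtain ⟨s, hsdef⟩ : ∃ s, 2 + b = s := ⟨_, rfl⟩
  obtain ⟨p, hpdef⟩ : ∃ p, 2 * b = p := ⟨_, rfl⟩
  rw [hsdef, hpdef] at hrev
  have hps : p + 4 = 2 * s := by omega
  have hsb : β + 2 ≤ s := by omega
  have hpb : 2 * β ≤ p := by omega
  have hs0 : s ≠ 0 := by omega
  have hp0 : p ≠ 0 := by omega
  obtain ⟨k, hkdef⟩ : ∃ k, (Nat.digits β s).length = k := ⟨_, rfl⟩
  have hk : (Nat.digits β p).length = k := by rw [hrev, List.length_reverse, hkdef]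
  have hsU : s < β ^ k := by rw [← hkdef]; exact Nat.lt_base_pow_length_digits hβ1
  have hpU : p < β ^ k := by rw [← hk]; exact Nat.lt_base_pow_length_digits hβ1
  have hkls : k = Nat.log β s + 1 := by rw [← hkdef]; exact Nat.digits_len β s hβ1 hs0
  have hklp : k = Nat.log β p + 1 := by rw [← hk]; exact Nat.digits_len β p hβ1 hp0
  have hsL : β ^ (k - 1) ≤ s := by
    have := Nat.pow_log_le_self β hs0
    have h1 : k - 1 = Nat.log β s := by omega
    rwa [h1]
  have hpL : β ^ (k - 1) ≤ p := by
    have := Nat.pow_log_le_self β hp0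
    have h1 : k - 1 = Nat.log β p := by omega
    rwa [h1]
  have hk2 : 2 ≤ k := by
    have : 1 ≤ Nat.log β s := (Nat.le_log_iff_pow_le hβ1 hs0).mpr (by simpa using (by omega : β ≤ s))
    omega
  have R : ∀ i, i < k → p / β ^ i % β = s / β ^ (k - 1 - i) % β := by
    intro i hi
    have hi' : i < (Nat.digits β p).length := by omega
    have hj' : k - 1 - i < (Nat.digits β s).length := by omega
    calc p / β ^ i % β = (Nat.digits β p)[i]'hi' := (digitsGet hβ1 i p hi').symm
      _ = ((Nat.digits β s).reverse)[i]'(by rw [List.length_reverse]; omega) := by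
          simp only [List.getElem_of_eq hrev]
      _ = (Nat.digits β s)[(Nat.digits β s).length - 1 - i]'(by rw [hkdef]; omega) :=
          List.getElem_reverse _
      _ = (Nat.digits β s)[k - 1 - i]'hj' := by simp only [hkdef]
      _ = s / β ^ (k - 1 - i) % β := digitsGet hβ1 _ s hj'
  have hA3lt : s / β ^ (k - 1) < β := by
    apply Nat.div_lt_of_lt_mul
    calc s < β ^ k := hsU
      _ = β ^ (k - 1) * β := by rw [← pow_succ]; congr 1; omega
  have hA3pos : 1 ≤ s / β ^ (k - 1) := (Nat.one_le_div_iff (by positivity)).mpr hsL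
  have hP0lt : p / β ^ (k - 1) < β := by
    apply Nat.div_lt_of_lt_mul
    calc p < β ^ k := hpU
      _ = β ^ (k - 1) * β := by rw [← pow_succ]; congr 1; omega
  have hP0pos : 1 ≤ p / β ^ (k - 1) := (Nat.one_le_div_iff (by positivity)).mpr hpL
  have rA : p % β = s / β ^ (k - 1) := by
    have := R 0 (by omega)
    simpa [Nat.mod_eq_of_lt hA3lt] using this
  have rD : p / β ^ (k - 1) = s % β := by
    have := R (k - 1) (by omega)
    rw [Nat.mod_eq_of_lt hP0lt] at this
    simpa using this
  have hA0pos : 1 ≤ s % β := by omega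
  have hA0lt : s % β < β := Nat.mod_lt _ (by omega)
  rcases (by omega : k = 2 ∨ 3 ≤ k) with hk3 | hk3
  · -- two-digit case
    subst hk3
    obtain ⟨x, hx⟩ : ∃ x, s % β = x := ⟨_, rfl⟩
    obtain ⟨y, hy⟩ : ∃ y, s / β = y := ⟨_, rfl⟩
    have hpow : β ^ (2 - 1) = β := by norm_num
    rw [hpow] at rA rD hA3lt hA3pos
    rw [hy] at rA hA3lt hA3pos
    rw [hx] at rD hA0pos hA0lt
    have E1 : x + β * y = s := by rw [← hx, ← hy]; exact Nat.mod_add_div s β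
    have E2 : y + β * x = p := by
      have h2 : p % β + β * (p / β) = p := Nat.mod_add_div p β
      rwa [rA, rD] at h2
    have e : (y : ℤ) + (β : ℤ) * x + 4 = 2 * x + 2 * β * y := by
      have E1' : (x : ℤ) + β * y = s := by exact_mod_cast E1
      have E2' : (y : ℤ) + β * x = p := by exact_mod_cast E2
      have hps' : (p : ℤ) + 4 = 2 * s := by exact_mod_cast hps
      linear_combination E2' + hps' - 2 * E1'
    exact core2 (β : ℤ) x y (by exact_mod_cast hβ) (by omega)
      (by exact_mod_cast hA0pos) (by exact_mod_cast hA0lt)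
      (by exact_mod_cast hA3pos) (by exact_mod_cast hA3lt) e
  · -- k ≥ 3 case
    obtain ⟨j, rfl⟩ : ∃ j, k = j + 3 := ⟨k - 3, by omega⟩
    have hkm1 : j + 3 - 1 = j + 2 := by omega
    rw [hkm1] at rA rD hA3lt hA3pos hP0lt hP0pos hsL hpL
    have rB : p / β % β = s / β ^ (j + 1) % β := by
      have := R 1 (by omega)
      simpa using this
    have rC : p / β ^ (j + 1) % β = s / β % β := by
      have := R (j + 1) (by omega)
      have h1 : j + 3 - 1 - (j + 1) = 1 := by omega
      rw [h1] at this
      simpa using this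
    -- opaque digit variables
    obtain ⟨A0, hA0⟩ : ∃ x, s % β = x := ⟨_, rfl⟩
    obtain ⟨A1, hA1⟩ : ∃ x, s / β % β = x := ⟨_, rfl⟩
    obtain ⟨A2, hA2⟩ : ∃ x, s / β ^ (j + 1) % β = x := ⟨_, rfl⟩
    obtain ⟨A3, hA3⟩ : ∃ x, s / β ^ (j + 2) = x := ⟨_, rfl⟩
    obtain ⟨S2, hS2⟩ : ∃ x, s / β ^ 2 = x := ⟨_, rfl⟩
    obtain ⟨P2, hP2⟩ : ∃ x, p / β ^ 2 = x := ⟨_, rfl⟩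
    obtain ⟨V, hV⟩ : ∃ x, s / β ^ (j + 1) = x := ⟨_, rfl⟩
    obtain ⟨W, hW⟩ : ∃ x, s % β ^ (j + 1) = x := ⟨_, rfl⟩
    obtain ⟨Q, hQ⟩ : ∃ x, p / β ^ (j + 1) = x := ⟨_, rfl⟩
    obtain ⟨PR, hPR⟩ : ∃ x, p % β ^ (j + 1) = x := ⟨_, rfl⟩
    rw [hA0] at hA0pos hA0lt rD
    rw [hA3] at hA3pos hA3lt
    have hA1lt : A1 < β := by rw [← hA1]; exact Nat.mod_lt _ (by omega)
    have hA2lt : A2 < β := by rw [← hA2]; exact Nat.mod_lt _ (by omega)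
    have hB5 : 5 ≤ β ^ (j + 1) := le_trans hβ (Nat.le_self_pow (by omega) β)
    -- m2 relations
    have m2p : p % β ^ 2 = A3 + β * A2 := by
      rw [pow_two, Nat.mod_mul, rA, hA3, rB, hA2]
    have m2s : s % β ^ 2 = A0 + β * A1 := by
      rw [pow_two, Nat.mod_mul, hA0, hA1]
    have hdp : β ^ 2 * P2 + (A3 + β * A2) = p := by
      rw [← m2p, ← hP2]; exact Nat.div_add_mod p (β ^ 2)
    have hds : β ^ 2 * S2 + (A0 + β * A1) = s := by
      rw [← m2s, ← hS2]; exact Nat.div_add_mod s (β ^ 2)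
    -- Q and V decompositions
    have hQe : Q = A1 + β * A0 := by
      have h1 : Q % β + β * (Q / β) = Q := Nat.mod_add_div Q β
      have h2 : Q % β = A1 := by rw [← hQ, rC, hA1]
      have h3 : Q / β = A0 := by
        rw [← hQ, Nat.div_div_eq_div_mul, ← pow_succ, ← rD]
      rw [h2, h3] at h1
      omega
    have hVe : V = A2 + β * A3 := by
      have h1 : V % β + β * (V / β) = V := Nat.mod_add_div V β
      have h2 : V % β = A2 := by rw [← hV, hA2]
      have h3 : V / β = A3 := by
        rw [← hV, Nat.div_div_eq_div_mul, ← pow_succ, hA3]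
      rw [h2, h3] at h1
      omega
    have hsVW : β ^ (j + 1) * V + W = s := by rw [← hV, ← hW]; exact Nat.div_add_mod s _
    have hpQR : β ^ (j + 1) * Q + PR = p := by rw [← hQ, ← hPR]; exact Nat.div_add_mod p _
    have hWlt : W < β ^ (j + 1) := by rw [← hW]; exact Nat.mod_lt _ (by positivity)
    have hPRlt : PR < β ^ (j + 1) := by rw [← hPR]; exact Nat.mod_lt _ (by positivity)
    have hA0W : A0 = W % β := by
      rw [← hA0, ← hW, Nat.mod_mod_of_dvd s (dvd_pow_self β (Nat.succ_ne_zero j))]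
    -- integer casts
    have hβ' : (5 : ℤ) ≤ (β : ℤ) := by exact_mod_cast hβ
    have hps' : (p : ℤ) + 4 = 2 * (s : ℤ) := by exact_mod_cast hps
    have hdp' : ((β : ℤ)) ^ 2 * P2 + ((A3 : ℤ) + β * A2) = p := by exact_mod_cast hdp
    have hds' : ((β : ℤ)) ^ 2 * S2 + ((A0 : ℤ) + β * A1) = s := by exact_mod_cast hds
    have b0 : (1 : ℤ) ≤ (A0 : ℤ) := by exact_mod_cast hA0pos
    have b0' : (A0 : ℤ) < β := by exact_mod_cast hA0lt
    have b1 : (0 : ℤ) ≤ (A1 : ℤ) := by positivity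
    have b1' : (A1 : ℤ) < β := by exact_mod_cast hA1lt
    have b2 : (0 : ℤ) ≤ (A2 : ℤ) := by positivity
    have b2' : (A2 : ℤ) < β := by exact_mod_cast hA2lt
    have b3 : (1 : ℤ) ≤ (A3 : ℤ) := by exact_mod_cast hA3pos
    have b3' : (A3 : ℤ) < β := by exact_mod_cast hA3lt
    have hbA1 : (β : ℤ) * A1 ≤ β * (β - 1) :=
      mul_le_mul_of_nonneg_left (by linarith) (by positivity)
    have hbA2 : (β : ℤ) * A2 ≤ β * (β - 1) :=
      mul_le_mul_of_nonneg_left (by linarith) (by positivity)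
    have hbA1' : (0 : ℤ) ≤ (β : ℤ) * A1 := by positivity
    have hbA2' : (0 : ℤ) ≤ (β : ℤ) * A2 := by positivity
    have hbS2 : (0 : ℤ) ≤ (S2 : ℤ) := by positivity
    have hbP2 : (0 : ℤ) ≤ (P2 : ℤ) := by positivity
    -- t
    have keyT : ((β : ℤ)) ^ 2 * (2 * (S2 : ℤ) - P2) = ((A3 : ℤ) + β * A2) + 4 - (2 * A0 + 2 * β * A1) := by
      linear_combination -hdp' + 2 * hds' - hps'
    have hβsq : (0 : ℤ) < (β : ℤ) ^ 2 := by positivity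
    have hβ2 : (25 : ℤ) ≤ (β : ℤ) ^ 2 := by
      have h := mul_le_mul hβ' hβ' (by norm_num) (by linarith : (0:ℤ) ≤ (β:ℤ))
      rw [pow_two]
      linarith
    have hT1 : 2 * (S2 : ℤ) - P2 ≤ 1 := by
      by_contra hc; push_neg at hc
      have h2 : (2 : ℤ) ≤ 2 * (S2 : ℤ) - P2 := by linarith
      have := mul_le_mul_of_nonneg_left h2 (le_of_lt hβsq)
      linarith
    have hT2 : (-1 : ℤ) ≤ 2 * (S2 : ℤ) - P2 := by
      by_contra hc; push_neg at hc
      have h2 : 2 * (S2 : ℤ) - P2 ≤ -2 := by linarith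
      have := mul_le_mul_of_nonneg_left h2 (le_of_lt hβsq)
      linarith
    have e1 : (A3 : ℤ) + β * A2 = 2 * A0 + 2 * β * A1 - 4 + (2 * (S2 : ℤ) - P2) * (β : ℤ) ^ 2 := by
      linear_combination -keyT
    -- d
    have hsVW' : ((β : ℤ)) ^ (j + 1) * V + W = s := by exact_mod_cast hsVW
    have hpQR' : ((β : ℤ)) ^ (j + 1) * Q + PR = p := by exact_mod_cast hpQR
    have hWlt' : (W : ℤ) < (β : ℤ) ^ (j + 1) := by exact_mod_cast hWlt
    have hPRlt' : (PR : ℤ) < (β : ℤ) ^ (j + 1) := by exact_mod_cast hPRlt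
    have hB5' : (5 : ℤ) ≤ (β : ℤ) ^ (j + 1) := by exact_mod_cast hB5
    have hW0 : (0 : ℤ) ≤ (W : ℤ) := by positivity
    have hPR0 : (0 : ℤ) ≤ (PR : ℤ) := by positivity
    have keyD : ((β : ℤ)) ^ (j + 1) * ((Q : ℤ) - 2 * V) = 2 * (W : ℤ) - 4 - PR := by
      linear_combination hpQR' - 2 * hsVW' + hps'
    have hD1 : (Q : ℤ) - 2 * V ≤ 1 := by
      by_contra hc; push_neg at hc
      have h2 : (2 : ℤ) ≤ (Q : ℤ) - 2 * V := by linarith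
      have := mul_le_mul_of_nonneg_left h2 (show (0:ℤ) ≤ (β : ℤ) ^ (j+1) by positivity)
      linarith
    have hD2 : (-1 : ℤ) ≤ (Q : ℤ) - 2 * V := by
      by_contra hc; push_neg at hc
      have h2 : (Q : ℤ) - 2 * V ≤ -2 := by linarith
      have := mul_le_mul_of_nonneg_left h2 (show (0:ℤ) ≤ (β : ℤ) ^ (j+1) by positivity)
      linarith
    have hDneg : ((Q : ℤ) - 2 * V = -1) → (A0 : ℤ) ≤ 1 := by
      intro hd
      rw [hd] at keyD
      have hW1 : (W : ℤ) ≤ 1 := by linarith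
      have hWn : W ≤ 1 := by exact_mod_cast hW1
      have : A0 ≤ 1 := by
        rw [hA0W, Nat.mod_eq_of_lt (by omega : W < β)]
        exact hWn
      exact_mod_cast this
    have hQe' : (Q : ℤ) = (A1 : ℤ) + β * A0 := by exact_mod_cast hQe
    have hVe' : (V : ℤ) = (A2 : ℤ) + β * A3 := by exact_mod_cast hVe
    have e2 : (A1 : ℤ) + β * A0 = 2 * A2 + 2 * β * A3 + ((Q : ℤ) - 2 * V) := by
      linear_combination -hQe' + 2 * hVe'
    exact core (β : ℤ) A0 A1 A2 A3 (2 * (S2 : ℤ) - P2) ((Q : ℤ) - 2 * V)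
      hβ' (by omega) b0 b0' b1 b1' b2 b2' b3 b3'
      (by omega) (by omega) hDneg e1 e2

lemma beta2 (b : ℕ) (h : IsRSP 2 2 b) : False := by
  obtain ⟨-, hb, hrev⟩ := h
  have hp0 : 0 < 2 * b := by omega
  have hs0 : 2 + b ≠ 0 := by omega
  have hne : Nat.digits 2 (2 + b) ≠ [] := Nat.digits_ne_nil_iff_ne_zero.mpr hs0
  have hhead : (Nat.digits 2 (2 * b)).head? = some 0 := by
    rw [Nat.digits_def' one_lt_two hp0]
    simp [Nat.mul_mod_right]
  rw [hrev, List.head?_reverse, List.getLast?_eq_getLast hne, Option.some_inj] at hhead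
  exact Nat.getLast_digit_ne_zero 2 hs0 hhead

lemma small (β b : ℕ) (hβ : 5 ≤ β) (h : IsRSP β 2 b) (hlt : b < β) : b = 2 := by
  obtain ⟨-, hb2, hrev⟩ := h
  have hβ1 : 1 < β := by omega
  by_contra hne
  have hb3 : 3 ≤ b := by omega
  rcases (by omega : 2 + b < β ∨ β ≤ 2 + b) with hc | hc
  · have hds : Nat.digits β (2 + b) = [2 + b] := by
      rw [Nat.digits_def' hβ1 (by omega), Nat.mod_eq_of_lt hc, Nat.div_eq_of_lt hc,
        Nat.digits_zero]
    rcases (by omega : 2 * b < β ∨ β ≤ 2 * b) with hc2 | hc2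
    · have hdp : Nat.digits β (2 * b) = [2 * b] := by
        rw [Nat.digits_def' hβ1 (by omega), Nat.mod_eq_of_lt hc2, Nat.div_eq_of_lt hc2,
          Nat.digits_zero]
      rw [hdp, hds] at hrev
      simp at hrev
      omega
    · have hdp : Nat.digits β (2 * b) = [2 * b % β, 2 * b / β] :=
        digitsTwo hβ1 hc2 (by nlinarith)
      rw [hdp, hds] at hrev
      simp at hrev
  · have hds : Nat.digits β (2 + b) = [(2 + b) % β, (2 + b) / β] :=
      digitsTwo hβ1 hc (by nlinarith)
    have hdp : Nat.digits β (2 * b) = [2 * b % β, 2 * b / β] :=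
      digitsTwo hβ1 (by omega) (by nlinarith)
    rw [hdp, hds] at hrev
    simp only [List.reverse_cons, List.reverse_nil, List.nil_append, List.cons_append,
      List.cons.injEq, and_true] at hrev
    obtain ⟨e1, e2⟩ := hrev
    -- (2+b)/β = 1, so (2+b)%β = 2+b-β ; 2*b/β = 1 similarly
    have hsd : (2 + b) / β = 1 := Nat.div_eq_of_lt_le (by omega) (by omega)
    have hpd : (2 * b) / β = 1 := Nat.div_eq_of_lt_le (by omega) (by omega)
    have hsm := Nat.div_add_mod (2 + b) β
    have hpm := Nat.div_add_mod (2 * b) β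
    rw [hsd] at hsm e1
    rw [hpd] at hpm e2
    omega

theorem stmt_19 (β : ℕ) (hβ : 2 ≤ β) (hmod : β % 3 = 2) :
    (∀ b, IsRSP β 2 b → b < β) ∧ (5 ≤ β → ∀ b, IsRSP β 2 b → b = 2) := by
  constructor
  · intro b hb
    rcases (by omega : β = 2 ∨ 5 ≤ β) with rfl | h5
    · exact (beta2 b hb).elim
    · by_contra hlt
      push_neg at hlt
      exact no_big β b h5 hmod hlt hb
  · intro h5 b hb
    have hlt : b < β := by
      by_contra hlt
      push_neg at hlt
      exact (no_big β b h5 hmod hlt hb).elim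
    exact small β b h5 hb hlt
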